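/- Let f ∈ K be entire of order ρ(f) ∈ [0,∞]. Then, with all limits as t → ∞ and taken in [0,∞]: liminf σ_f²(t)/m_f(t) ≤ liminf (log m_f(t))/(log t) ≤ liminf (log log f(t))/(log t) ≤ limsup (log log f(t))/(log t) = limsup (log m_f(t))/(log t) = ρ(f) ≤ limsup σ_f²(t)/m_f(t). -/

import Mathlib

open Filter Topology MeasureTheory
open scoped ENNReal NNReal Classical

noncomputable section

/-- `psum a t = ∑ aₙ tⁿ`, the value `f(t)` of the power series with coefficients `a`. -/
def psum (a : ℕ → ℝ) (t : ℝ) : ℝ := ∑' n : ℕ, a n * t ^ n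

/-- The mean `m_f(t)` of the Khinchin family of the power series with coefficients `a`. -/
def meanK (a : ℕ → ℝ) (t : ℝ) : ℝ :=
  (∑' n : ℕ, (n : ℝ) * a n * t ^ n) / ∑' n : ℕ, a n * t ^ n

/-- The variance `σ_f²(t)` of the Khinchin family. -/
def varK (a : ℕ → ℝ) (t : ℝ) : ℝ :=
  (∑' n : ℕ, (n : ℝ) ^ 2 * a n * t ^ n) / (∑' n : ℕ, a n * t ^ n) - meanK a t ^ 2

/-- The standard deviation `σ_f(t)` of the Khinchin family. -/
def sdK (a : ℕ → ℝ) (t : ℝ) : ℝ := Real.sqrt (varK a t)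

/-- The moment `E(X_t^p)` of real exponent `p` of the Khinchin family. -/
def momK (a : ℕ → ℝ) (p : ℝ) (t : ℝ) : ℝ :=
  (∑' n : ℕ, (n : ℝ) ^ p * a n * t ^ n) / ∑' n : ℕ, a n * t ^ n

/-- The filter of `t ↑ R`: `atTop` when `R = ∞`, and `𝓝[<] R` when `R < ∞`. -/
def nhdsUpto (R : ℝ≥0∞) : Filter ℝ :=
  if R = ⊤ then atTop else nhdsWithin R.toReal (Set.Iio R.toReal)


namespace St10

def P (a : ℕ → ℝ) (k : ℕ) (t : ℝ) : ℝ := ∑' n : ℕ, (n:ℝ)^k * a n * t ^ n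

variable {a : ℕ → ℝ}

lemma summableP (hpos : ∀ n, 0 ≤ a n) (hconv : ∀ t : ℝ, Summable fun n : ℕ => a n * t ^ n)
    (k : ℕ) {t : ℝ} (ht : 0 ≤ t) : Summable fun n : ℕ => (n:ℝ)^k * a n * t ^ n := by
  refine Summable.of_nonneg_of_le
    (fun n => mul_nonneg (mul_nonneg (by positivity) (hpos n)) (pow_nonneg ht n))
    (fun n => ?_) (hconv ((2:ℝ)^k * t))
  have h1 : (n:ℝ)^k ≤ ((2:ℝ)^k)^n := by
    calc (n:ℝ)^k ≤ ((2:ℝ)^n)^k := by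
          gcongr
          exact_mod_cast (Nat.lt_two_pow_self (n := n)).le
      _ = ((2:ℝ)^k)^n := by rw [← pow_mul, ← pow_mul, Nat.mul_comm]
  calc (n:ℝ)^k * a n * t^n ≤ ((2:ℝ)^k)^n * a n * t^n := by
        have h2 : (0:ℝ) ≤ a n * t^n := mul_nonneg (hpos n) (pow_nonneg ht n)
        calc (n:ℝ)^k * a n * t^n = (n:ℝ)^k * (a n * t^n) := by ring
          _ ≤ ((2:ℝ)^k)^n * (a n * t^n) := mul_le_mul_of_nonneg_right h1 h2
          _ = ((2:ℝ)^k)^n * a n * t^n := by ring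
    _ = a n * ((2:ℝ)^k * t)^n := by rw [mul_pow]; ring

lemma P_term_nonneg (hpos : ∀ n, 0 ≤ a n) (k : ℕ) {t : ℝ} (ht : 0 ≤ t) (n : ℕ) :
    0 ≤ (n:ℝ)^k * a n * t ^ n :=
  mul_nonneg (mul_nonneg (by positivity) (hpos n)) (pow_nonneg ht n)

lemma le_P (hpos : ∀ n, 0 ≤ a n) (hconv : ∀ t : ℝ, Summable fun n : ℕ => a n * t ^ n)
    (k : ℕ) {t : ℝ} (ht : 0 ≤ t) (N : ℕ) : (N:ℝ)^k * a N * t^N ≤ P a k t :=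
  Summable.le_tsum (summableP hpos hconv k ht) N (fun n _ => P_term_nonneg hpos k ht n)

lemma P_nonneg (hpos : ∀ n, 0 ≤ a n) (k : ℕ) {t : ℝ} (ht : 0 ≤ t) : 0 ≤ P a k t :=
  tsum_nonneg (P_term_nonneg hpos k ht)

lemma P0_pos (hpos : ∀ n, 0 ≤ a n) (ha0 : 0 < a 0)
    (hconv : ∀ t : ℝ, Summable fun n : ℕ => a n * t ^ n) {t : ℝ} (ht : 0 ≤ t) :
    0 < P a 0 t := by
  have h := le_P hpos hconv 0 ht 0
  simp only [pow_zero, one_mul] at h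
  nlinarith [h]

lemma Pk_pos (hpos : ∀ n, 0 ≤ a n) (ha1 : ∃ n, 1 ≤ n ∧ 0 < a n)
    (hconv : ∀ t : ℝ, Summable fun n : ℕ => a n * t ^ n) (k : ℕ) {t : ℝ} (ht : 0 < t) :
    0 < P a k t := by
  obtain ⟨N, hN1, hN⟩ := ha1
  have h := le_P hpos hconv k ht.le N
  have : (0:ℝ) < (N:ℝ)^k * a N * t^N := by
    have : (0:ℝ) < (N:ℝ) := by exact_mod_cast hN1
    positivity
  linarith

/-- Derivative of `P k` at `t > 0`. -/
lemma hasDerivAt_P (hpos : ∀ n, 0 ≤ a n) (hconv : ∀ t : ℝ, Summable fun n : ℕ => a n * t ^ n)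
    (k : ℕ) {t : ℝ} (ht : 0 < t) : HasDerivAt (P a k) (P a (k+1) t / t) t := by
  set T : ℝ := t + 1 with hT
  have hT0 : 0 < T := by linarith
  have hsum : Summable fun n : ℕ => (n:ℝ)^(k+1) * a n * T ^ (n-1) := by
    have h := (summableP hpos hconv (k+1) hT0.le).div_const T
    refine h.congr fun n => ?_
    cases n with
    | zero => simp
    | succ m => 
      show (↑(m+1):ℝ)^(k+1) * a (m+1) * T^(m+1) / T = (↑(m+1):ℝ)^(k+1) * a (m+1) * T ^ (m+1-1)
      rw [Nat.add_sub_cancel, pow_succ]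
      field_simp
      rw [pow_succ]
      ring
  have key : HasDerivAt (fun z => ∑' n : ℕ, (n:ℝ)^k * a n * z ^ n)
      (∑' n : ℕ, (n:ℝ)^k * a n * ((n:ℝ) * t ^ (n-1))) t := by
    refine hasDerivAt_tsum_of_isPreconnected
      (g := fun (n:ℕ) (z:ℝ) => (n:ℝ)^k * a n * z ^ n)
      (g' := fun (n:ℕ) (z:ℝ) => (n:ℝ)^k * a n * ((n:ℝ) * z ^ (n-1)))
      (u := fun (n:ℕ) => (n:ℝ)^(k+1) * a n * T ^ (n-1))
      hsum (isOpen_Ioo (a := -T) (b := T))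
      (convex_Ioo _ _).isPreconnected (fun n y _ => ?_) (fun n y hy => ?_)
      (show (0:ℝ) ∈ Set.Ioo (-T) T by constructor <;> simp [hT0] <;> linarith)
      ?_ (show t ∈ Set.Ioo (-T) T by constructor <;> [linarith; simp [hT]])
    · simpa using ((hasDerivAt_pow n y).const_mul ((n:ℝ)^k * a n))
    · have hyT : |y| ≤ T := by
        rw [abs_le]; exact ⟨hy.1.le, hy.2.le⟩
      calc ‖(n:ℝ)^k * a n * ((n:ℝ) * y ^ (n-1))‖ 
          = (n:ℝ)^k * a n * (n:ℝ) * |y ^ (n-1)| := by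
            rw [Real.norm_eq_abs, abs_mul, abs_mul, abs_mul,
              abs_of_nonneg (by positivity : (0:ℝ) ≤ (n:ℝ)^k),
              abs_of_nonneg (hpos n),
              abs_of_nonneg (by positivity : (0:ℝ) ≤ (n:ℝ))]
            ring
        _ ≤ (n:ℝ)^k * a n * (n:ℝ) * T^(n-1) := by
            have := hpos n
            gcongr
            rw [abs_pow]
            exact pow_le_pow_left₀ (abs_nonneg y) hyT _
        _ = (n:ℝ)^(k+1) * a n * T^(n-1) := by rw [pow_succ]; ring
    · exact summableP hpos hconv k le_rfl
  have : (∑' n : ℕ, (n:ℝ)^k * a n * ((n:ℝ) * t ^ (n-1))) = P a (k+1) t / t := by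
    rw [P, ← tsum_div_const]
    refine tsum_congr fun n => ?_
    cases n with
    | zero => simp
    | succ m =>
      show (↑(m+1):ℝ)^k * a (m+1) * ((↑(m+1):ℝ) * t ^ (m+1-1)) = (↑(m+1):ℝ)^(k+1) * a (m+1) * t^(m+1) / t
      rw [Nat.add_sub_cancel, pow_succ (t) m, pow_succ ((m+1:ℕ):ℝ) k]
      field_simp
  rw [← this]
  exact key

/-- Cauchy-Schwarz: P1² ≤ P0 * P2. -/
lemma CS (hpos : ∀ n, 0 ≤ a n) (hconv : ∀ t : ℝ, Summable fun n : ℕ => a n * t ^ n)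
    (hsum : ∀ k t, 0 ≤ t → Summable fun n : ℕ => (n:ℝ)^k * a n * t ^ n)
    {t : ℝ} (ht : 0 ≤ t) : P a 1 t ^ 2 ≤ P a 0 t * P a 2 t := by
  have hterm : ∀ k (n:ℕ), 0 ≤ (n:ℝ)^k * a n * t^n := fun k n =>
    mul_nonneg (mul_nonneg (by positivity) (hpos n)) (pow_nonneg ht n)
  have key : ∀ s : Finset ℕ, (∑ n ∈ s, (n:ℝ)^1 * a n * t^n)^2 ≤ P a 0 t * P a 2 t := by
    intro s
    have h1 : (∑ n ∈ s, (n:ℝ)^1 * a n * t^n)^2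
        ≤ (∑ n ∈ s, (n:ℝ)^0 * a n * t^n) * (∑ n ∈ s, (n:ℝ)^2 * a n * t^n) := by
      refine Finset.sum_sq_le_sum_mul_sum_of_sq_eq_mul s
        (fun i _ => hterm 0 i) (fun i _ => hterm 2 i) (fun i _ => ?_)
      ring
    refine h1.trans ?_
    have h2 := Summable.sum_le_tsum s (fun n _ => hterm 0 n) (hsum 0 t ht)
    have h3 := Summable.sum_le_tsum s (fun n _ => hterm 2 n) (hsum 2 t ht)
    exact mul_le_mul h2 h3 (Finset.sum_nonneg fun i _ => hterm 2 i) ((Finset.sum_nonneg fun i _ => hterm 0 i).trans h2)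
  have hs : HasSum (fun n : ℕ => (n:ℝ)^1 * a n * t^n) (P a 1 t) := (hsum 1 t ht).hasSum
  have htend : Tendsto (fun s : Finset ℕ => (∑ n ∈ s, (n:ℝ)^1 * a n * t^n)^2) atTop (𝓝 ((P a 1 t)^2)) :=
    (hs : Tendsto _ atTop (𝓝 (P a 1 t))).pow 2
  exact le_of_tendsto' htend key

end St10
namespace St10
variable {a : ℕ → ℝ}
section main
variable (hpos : ∀ n, 0 ≤ a n) (ha0 : 0 < a 0) (ha1 : ∃ n, 1 ≤ n ∧ 0 < a n)
  (hconv : ∀ t : ℝ, Summable fun n : ℕ => a n * t ^ n)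
include hpos ha0 ha1 hconv

lemma psum_eq (t : ℝ) : psum a t = P a 0 t := tsum_congr fun n => by simp

lemma meanK_eq (t : ℝ) : meanK a t = P a 1 t / P a 0 t := by
  unfold meanK P
  congr 1
  · exact tsum_congr fun n => by rw [pow_one]
  · exact tsum_congr fun n => by rw [pow_zero, one_mul]

lemma varK_eq (t : ℝ) : varK a t = P a 2 t / P a 0 t - meanK a t ^ 2 := by
  unfold varK P
  congr 2
  exact tsum_congr fun n => by rw [pow_zero, one_mul]

lemma meanK_pos {t : ℝ} (ht : 0 < t) : 0 < meanK a t := by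
  rw [meanK_eq hpos ha0 ha1 hconv]
  exact div_pos (Pk_pos hpos ha1 hconv 1 ht) (P0_pos hpos ha0 hconv ht.le)

lemma varK_nonneg {t : ℝ} (ht : 0 ≤ t) : 0 ≤ varK a t := by
  rw [varK_eq hpos ha0 ha1 hconv, meanK_eq hpos ha0 ha1 hconv]
  have h0 := P0_pos hpos ha0 hconv ht
  have hcs := CS hpos hconv (fun k t ht => summableP hpos hconv k ht) ht
  rw [div_pow, div_sub_div _ _ h0.ne' (by positivity)]
  apply div_nonneg _ (by positivity)
  rw [sq (P a 0 t)]
  nlinarith [P_nonneg hpos 2 ht]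

lemma hasDerivAt_meanK {t : ℝ} (ht : 0 < t) :
    HasDerivAt (meanK a) (varK a t / t) t := by
  have h0 := P0_pos hpos ha0 hconv ht.le
  have hd := (hasDerivAt_P hpos hconv 1 ht).div (hasDerivAt_P hpos hconv 0 ht) h0.ne'
  have heq : (P a 2 t / t * P a 0 t - P a 1 t * (P a 1 t / t)) / P a 0 t ^ 2
      = varK a t / t := by
    rw [varK_eq hpos ha0 ha1 hconv, meanK_eq hpos ha0 ha1 hconv]
    field_simp
  have hfun : meanK a = fun x => P a 1 x / P a 0 x := funext (meanK_eq hpos ha0 ha1 hconv)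
  rw [hfun, ← heq]
  exact hd

lemma continuousAt_P (k : ℕ) {t : ℝ} (ht : 0 < t) : ContinuousAt (P a k) t :=
  (hasDerivAt_P hpos hconv k ht).continuousAt

lemma continuousAt_meanK {t : ℝ} (ht : 0 < t) : ContinuousAt (meanK a) t :=
  (hasDerivAt_meanK hpos ha0 ha1 hconv ht).continuousAt

lemma continuousAt_varK {t : ℝ} (ht : 0 < t) : ContinuousAt (varK a) t := by
  have hfun : varK a = fun x => P a 2 x / P a 0 x - meanK a x ^ 2 :=
    funext (varK_eq hpos ha0 ha1 hconv)
  rw [hfun]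
  exact (((continuousAt_P hpos ha0 ha1 hconv 2 ht).div
    (continuousAt_P hpos ha0 ha1 hconv 0 ht) (P0_pos hpos ha0 hconv ht.le).ne').sub
    ((continuousAt_meanK hpos ha0 ha1 hconv ht).pow 2))

lemma meanK_mono : MonotoneOn (meanK a) (Set.Ioi (0:ℝ)) := by
  refine monotoneOn_of_deriv_nonneg (convex_Ioi 0)
    (fun x hx => (continuousAt_meanK hpos ha0 ha1 hconv hx).continuousWithinAt)
    (fun x hx => ?_) (fun x hx => ?_)
  · rw [interior_Ioi] at hx
    exact (hasDerivAt_meanK hpos ha0 ha1 hconv hx).differentiableAt.differentiableWithinAt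
  · rw [interior_Ioi] at hx
    rw [(hasDerivAt_meanK hpos ha0 ha1 hconv hx).deriv]
    exact div_nonneg (varK_nonneg hpos ha0 ha1 hconv (le_of_lt hx)) (le_of_lt hx)

lemma contOn_meanK_div {u x : ℝ} (hu : 0 < u) :
    ContinuousOn (fun s => meanK a s / s) (Set.Icc u x) := fun s hs =>
  (((continuousAt_meanK hpos ha0 ha1 hconv (lt_of_lt_of_le hu hs.1)).div
    continuousAt_id (ne_of_gt (lt_of_lt_of_le hu hs.1)))).continuousWithinAt

lemma contOn_VK_div {u x : ℝ} (hu : 0 < u) :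
    ContinuousOn (fun s => varK a s / meanK a s / s) (Set.Icc u x) := fun s hs => by
  have hs0 : 0 < s := lt_of_lt_of_le hu hs.1
  exact (((continuousAt_varK hpos ha0 ha1 hconv hs0).div
    (continuousAt_meanK hpos ha0 ha1 hconv hs0)
    (meanK_pos hpos ha0 ha1 hconv hs0).ne').div
    continuousAt_id hs0.ne').continuousWithinAt

lemma FTC_logF {u x : ℝ} (hu : 0 < u) (hx : u ≤ x) :
    Real.log (P a 0 x) - Real.log (P a 0 u) = ∫ s in u..x, meanK a s / s := by
  have hint : IntervalIntegrable (fun s => meanK a s / s) MeasureTheory.volume u x := by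
    apply ContinuousOn.intervalIntegrable
    rw [Set.uIcc_of_le hx]
    exact contOn_meanK_div hpos ha0 ha1 hconv hu
  have hder : ∀ s ∈ Set.uIcc u x, HasDerivAt (fun y => Real.log (P a 0 y)) (meanK a s / s) s := by
    intro s hs
    rw [Set.uIcc_of_le hx] at hs
    have hs0 : 0 < s := lt_of_lt_of_le hu hs.1
    have hd := (hasDerivAt_P hpos hconv 0 hs0).log (P0_pos hpos ha0 hconv hs0.le).ne'
    have heq : P a 1 s / s / P a 0 s = meanK a s / s := by
      rw [meanK_eq hpos ha0 ha1 hconv]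
      field_simp
    rwa [heq] at hd
  rw [intervalIntegral.integral_eq_sub_of_hasDerivAt hder hint]

lemma FTC_logm {u x : ℝ} (hu : 0 < u) (hx : u ≤ x) :
    Real.log (meanK a x) - Real.log (meanK a u) = ∫ s in u..x, varK a s / meanK a s / s := by
  have hint : IntervalIntegrable (fun s => varK a s / meanK a s / s) MeasureTheory.volume u x := by
    apply ContinuousOn.intervalIntegrable
    rw [Set.uIcc_of_le hx]
    exact contOn_VK_div hpos ha0 ha1 hconv hu
  have hder : ∀ s ∈ Set.uIcc u x,
      HasDerivAt (fun y => Real.log (meanK a y)) (varK a s / meanK a s / s) s := by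
    intro s hs
    rw [Set.uIcc_of_le hx] at hs
    have hs0 : 0 < s := lt_of_lt_of_le hu hs.1
    have hd := (hasDerivAt_meanK hpos ha0 ha1 hconv hs0).log
      (meanK_pos hpos ha0 ha1 hconv hs0).ne'
    have heq : varK a s / s / meanK a s = varK a s / meanK a s / s := by
      rw [div_div, div_div, mul_comm]
    rwa [heq] at hd
  rw [intervalIntegral.integral_eq_sub_of_hasDerivAt hder hint]

end main

/-- lower bound for `∫ g(s)/s`. -/
lemma integral_div_ge {g : ℝ → ℝ} {u x c : ℝ} (hu : 0 < u) (hx : u ≤ x)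
    (hcont : ContinuousOn (fun s => g s / s) (Set.Icc u x))
    (hb : ∀ s ∈ Set.Icc u x, c ≤ g s) :
    c * (Real.log x - Real.log u) ≤ ∫ s in u..x, g s / s := by
  have hx0 : 0 < x := lt_of_lt_of_le hu hx
  have h1 : Real.log x - Real.log u = ∫ s in u..x, s⁻¹ := by
    rw [integral_inv_of_pos hu hx0, Real.log_div hx0.ne' hu.ne']
  rw [h1, ← intervalIntegral.integral_const_mul]
  refine intervalIntegral.integral_mono_on hx ?_ ?_ (fun s hs => ?_)
  · apply ContinuousOn.intervalIntegrable
    rw [Set.uIcc_of_le hx]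
    exact continuousOn_const.mul (continuousOn_inv₀.mono (fun s hs => ne_of_gt (lt_of_lt_of_le hu hs.1)))
  · apply ContinuousOn.intervalIntegrable
    rw [Set.uIcc_of_le hx]
    exact hcont
  · have hs0 : 0 < s := lt_of_lt_of_le hu hs.1
    rw [div_eq_mul_inv]
    exact mul_le_mul_of_nonneg_right (hb s hs) (inv_nonneg.2 hs0.le)

/-- upper bound for `∫ g(s)/s`. -/
lemma integral_div_le {g : ℝ → ℝ} {u x c : ℝ} (hu : 0 < u) (hx : u ≤ x)
    (hcont : ContinuousOn (fun s => g s / s) (Set.Icc u x))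
    (hb : ∀ s ∈ Set.Icc u x, g s ≤ c) :
    (∫ s in u..x, g s / s) ≤ c * (Real.log x - Real.log u) := by
  have hx0 : 0 < x := lt_of_lt_of_le hu hx
  have h1 : Real.log x - Real.log u = ∫ s in u..x, s⁻¹ := by
    rw [integral_inv_of_pos hu hx0, Real.log_div hx0.ne' hu.ne']
  rw [h1, ← intervalIntegral.integral_const_mul]
  refine intervalIntegral.integral_mono_on hx ?_ ?_ (fun s hs => ?_)
  · apply ContinuousOn.intervalIntegrable
    rw [Set.uIcc_of_le hx]
    exact hcont
  · apply ContinuousOn.intervalIntegrable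
    rw [Set.uIcc_of_le hx]
    exact continuousOn_const.mul (continuousOn_inv₀.mono (fun s hs => ne_of_gt (lt_of_lt_of_le hu hs.1)))
  · have hs0 : 0 < s := lt_of_lt_of_le hu hs.1
    rw [div_eq_mul_inv]
    exact mul_le_mul_of_nonneg_right (hb s hs) (inv_nonneg.2 hs0.le)


lemma ereal_le_of_forall_real_lt (x y : EReal) (h : ∀ c : ℝ, (c:EReal) < x → (c:EReal) ≤ y) :
    x ≤ y := by
  by_contra hlt
  push_neg at hlt
  obtain ⟨c, hyc, hcx⟩ := EReal.exists_between_coe_real hlt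
  exact absurd (h c hcx) (not_le.2 hyc)

lemma ereal_le_of_forall_gt (x y : EReal) (h : ∀ c : ℝ, y < (c:EReal) → x ≤ (c:EReal)) :
    x ≤ y := by
  by_contra hlt
  push_neg at hlt
  obtain ⟨c, hyc, hcx⟩ := EReal.exists_between_coe_real hlt
  exact absurd (h c hyc) (not_le.2 hcx)

lemma ereal_coe_le_of_forall_lt {c : ℝ} {y : EReal} (h : ∀ d : ℝ, d < c → (d:EReal) ≤ y) :
    (c:EReal) ≤ y := by
  by_contra hlt
  push_neg at hlt
  obtain ⟨d, hyd, hdc⟩ := EReal.exists_between_coe_real hlt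
  exact absurd (h d (EReal.coe_lt_coe_iff.1 hdc)) (not_le.2 hyd)

lemma ereal_le_coe_of_forall_gt {c : ℝ} {y : EReal} (h : ∀ d : ℝ, c < d → y ≤ (d:EReal)) :
    y ≤ (c:EReal) := by
  by_contra hlt
  push_neg at hlt
  obtain ⟨d, hyd, hdc⟩ := EReal.exists_between_coe_real hlt
  exact absurd (h d (EReal.coe_lt_coe_iff.1 hyd)) (not_le.2 hdc)

lemma theta_le (x y : EReal) (hy : (0:EReal) ≤ y)
    (h : ∀ c : ℝ, 0 < c → (c:EReal) < x → ∀ θ : ℝ, 0 < θ → θ < 1 → ((θ * c : ℝ):EReal) ≤ y) :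
    x ≤ y := by
  refine ereal_le_of_forall_real_lt x y (fun d hdx => ?_)
  rcases le_or_gt (d:EReal) 0 with hd | hd
  · exact hd.trans hy
  · obtain ⟨c, hdc, hcx⟩ := EReal.exists_between_coe_real hdx
    have hd0 : (0:ℝ) < d := by exact_mod_cast hd
    have hdc' : d < c := EReal.coe_lt_coe_iff.1 hdc
    have hc0 : 0 < c := hd0.trans hdc'
    have := h c hc0 hcx (d/c) (div_pos hd0 hc0) ((div_lt_one hc0).2 hdc')
    rwa [div_mul_cancel₀ d hc0.ne'] at this

lemma tendsto_const_div_log (C : ℝ) :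
    Tendsto (fun x : ℝ => C / Real.log x) atTop (𝓝 0) := by
  have h := Real.tendsto_log_atTop.inv_tendsto_atTop
  have := h.const_mul C
  simpa [div_eq_mul_inv, mul_zero] using this


section main2
variable {a : ℕ → ℝ}
variable (hpos : ∀ n, 0 ≤ a n) (ha0 : 0 < a 0) (ha1 : ∃ n, 1 ≤ n ∧ 0 < a n)
  (hconv : ∀ t : ℝ, Summable fun n : ℕ => a n * t ^ n)
include hpos ha0 ha1 hconv

lemma logm_ratio_ge {c s₀ : ℝ} (hs₀ : ∀ s ≥ s₀, c ≤ varK a s / meanK a s) :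
    ∀ᶠ x in atTop, c + (Real.log (meanK a (max s₀ 2)) - c * Real.log (max s₀ 2)) / Real.log x
      ≤ Real.log (meanK a x) / Real.log x := by
  set u := max s₀ 2 with hu
  have hu2 : (2:ℝ) ≤ u := le_max_right _ _
  have hu0 : (0:ℝ) < u := lt_of_lt_of_le two_pos hu2
  filter_upwards [eventually_ge_atTop u, eventually_ge_atTop (2:ℝ)] with x hx hx2
  have hlogx : 0 < Real.log x := Real.log_pos (by linarith)
  have hbound := integral_div_ge hu0 hx (contOn_VK_div hpos ha0 ha1 hconv hu0)
    (fun s hs => hs₀ s ((le_max_left _ _).trans hs.1))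
  have hftc := FTC_logm hpos ha0 ha1 hconv hu0 hx
  have hkey : c * Real.log x + (Real.log (meanK a u) - c * Real.log u)
      ≤ Real.log (meanK a x) := by linarith
  have h3 : (c * Real.log x + (Real.log (meanK a u) - c * Real.log u)) / Real.log x
      = c + (Real.log (meanK a u) - c * Real.log u) / Real.log x := by
    field_simp
  rw [← h3]
  exact div_le_div_of_nonneg_right hkey hlogx.le

lemma logm_ratio_le {c s₀ : ℝ} (hs₀ : ∀ s ≥ s₀, varK a s / meanK a s ≤ c) :
    ∀ᶠ x in atTop, Real.log (meanK a x) / Real.log x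
      ≤ c + (Real.log (meanK a (max s₀ 2)) - c * Real.log (max s₀ 2)) / Real.log x := by
  set u := max s₀ 2 with hu
  have hu2 : (2:ℝ) ≤ u := le_max_right _ _
  have hu0 : (0:ℝ) < u := lt_of_lt_of_le two_pos hu2
  filter_upwards [eventually_ge_atTop u, eventually_ge_atTop (2:ℝ)] with x hx hx2
  have hlogx : 0 < Real.log x := Real.log_pos (by linarith)
  have hbound := integral_div_le hu0 hx (contOn_VK_div hpos ha0 ha1 hconv hu0)
    (fun s hs => hs₀ s ((le_max_left _ _).trans hs.1))
  have hftc := FTC_logm hpos ha0 ha1 hconv hu0 hx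
  have hkey : Real.log (meanK a x)
      ≤ c * Real.log x + (Real.log (meanK a u) - c * Real.log u) := by linarith
  have h3 : (c * Real.log x + (Real.log (meanK a u) - c * Real.log u)) / Real.log x
      = c + (Real.log (meanK a u) - c * Real.log u) / Real.log x := by
    field_simp
  rw [← h3]
  exact div_le_div_of_nonneg_right hkey hlogx.le

lemma conj1 :
    Filter.liminf (fun t : ℝ => ((varK a t / meanK a t : ℝ) : EReal)) atTop ≤
      Filter.liminf (fun t : ℝ => ((Real.log (meanK a t) / Real.log t : ℝ) : EReal)) atTop := by
  refine ereal_le_of_forall_real_lt _ _ (fun c hc => ?_)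
  have hev : ∀ᶠ s in atTop, c ≤ varK a s / meanK a s :=
    (eventually_lt_of_lt_liminf hc).mono (fun s hs => (EReal.coe_lt_coe_iff.1 hs).le)
  obtain ⟨s₀, hs₀⟩ := eventually_atTop.1 hev
  have hkey := logm_ratio_ge hpos ha0 ha1 hconv hs₀
  set D := Real.log (meanK a (max s₀ 2)) - c * Real.log (max s₀ 2) with hD
  refine ereal_coe_le_of_forall_lt (fun d hd => ?_)
  refine le_liminf_of_le (by isBoundedDefault) ?_
  have htd : ∀ᶠ x in atTop, d - c < D / Real.log x :=
    (tendsto_const_div_log D).eventually_const_lt (by linarith)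
  filter_upwards [hkey, htd] with x h1 h2
  exact EReal.coe_le_coe_iff.2 (by linarith)

lemma conj5 :
    Filter.limsup (fun t : ℝ => ((Real.log (meanK a t) / Real.log t : ℝ) : EReal)) atTop ≤
      Filter.limsup (fun t : ℝ => ((varK a t / meanK a t : ℝ) : EReal)) atTop := by
  refine ereal_le_of_forall_gt _ _ (fun c hc => ?_)
  have hev : ∀ᶠ s in atTop, varK a s / meanK a s ≤ c :=
    (eventually_lt_of_limsup_lt hc).mono (fun s hs => (EReal.coe_lt_coe_iff.1 hs).le)
  obtain ⟨s₀, hs₀⟩ := eventually_atTop.1 hev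
  have hkey := logm_ratio_le hpos ha0 ha1 hconv hs₀
  set D := Real.log (meanK a (max s₀ 2)) - c * Real.log (max s₀ 2) with hD
  refine ereal_le_coe_of_forall_gt (fun d hd => ?_)
  refine limsup_le_of_le (by isBoundedDefault) ?_
  have htd : ∀ᶠ x in atTop, D / Real.log x < d - c :=
    (tendsto_const_div_log D).eventually_lt_const (by linarith)
  filter_upwards [hkey, htd] with x h1 h2
  exact EReal.coe_le_coe_iff.2 (by linarith)


lemma tendsto_F : Tendsto (fun t : ℝ => P a 0 t) atTop atTop := by
  obtain ⟨N, hN1, hN⟩ := ha1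
  refine tendsto_atTop_mono' atTop ?_ (tendsto_id.const_mul_atTop hN)
  filter_upwards [eventually_ge_atTop (1:ℝ)] with t ht
  have h1 : a N * t ≤ a N * t ^ N :=
    mul_le_mul_of_nonneg_left (le_self_pow₀ (by linarith) (by omega)) (hpos N)
  have h2 := le_P hpos hconv 0 (by linarith : (0:ℝ) ≤ t) N
  simp only [pow_zero, one_mul] at h2
  exact h1.trans h2

lemma ev_logF_ge (C : ℝ) : ∀ᶠ t in atTop, C ≤ Real.log (P a 0 t) :=
  (Real.tendsto_log_atTop.comp (tendsto_F hpos ha0 ha1 hconv)).eventually_ge_atTop C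

lemma liminfB_nonneg :
    (0:EReal) ≤ Filter.liminf
      (fun t : ℝ => ((Real.log (Real.log (psum a t)) / Real.log t : ℝ) : EReal)) atTop := by
  refine le_liminf_of_le (by isBoundedDefault) ?_
  filter_upwards [ev_logF_ge hpos ha0 ha1 hconv 1, eventually_ge_atTop (2:ℝ)] with t h1 h2
  have hlt : 0 < Real.log t := Real.log_pos (by linarith)
  rw [psum_eq hpos ha0 ha1 hconv]
  have : (0:ℝ) ≤ Real.log (Real.log (P a 0 t)) / Real.log t :=
    div_nonneg (Real.log_nonneg h1) hlt.le
  exact_mod_cast this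

lemma liminfA_nonneg :
    (0:EReal) ≤ Filter.liminf
      (fun t : ℝ => ((Real.log (meanK a t) / Real.log t : ℝ) : EReal)) atTop := by
  rw [show ((0:EReal)) = ((0:ℝ):EReal) from rfl]
  refine ereal_coe_le_of_forall_lt (fun d hd => ?_)
  refine le_liminf_of_le (by isBoundedDefault) ?_
  set K := Real.log (meanK a 2) with hK
  filter_upwards [eventually_ge_atTop (2:ℝ),
    (tendsto_const_div_log K).eventually_const_lt (show d < 0 by linarith)] with t h2 h3
  have hlt : 0 < Real.log t := Real.log_pos (by linarith)
  have hmono := meanK_mono hpos ha0 ha1 hconv (Set.mem_Ioi.2 (by norm_num : (0:ℝ) < 2))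
    (Set.mem_Ioi.2 (by linarith : (0:ℝ) < t)) h2
  have h4 : K ≤ Real.log (meanK a t) :=
    Real.log_le_log (meanK_pos hpos ha0 ha1 hconv (by norm_num)) hmono
  have h5 : K / Real.log t ≤ Real.log (meanK a t) / Real.log t :=
    div_le_div_of_nonneg_right h4 hlt.le
  exact EReal.coe_le_coe_iff.2 (by linarith)

/-- Key pointwise implication: if the mean-ratio at `t^θ` is at least `c`, then the
`log log f / log` ratio at `t` is at least `θ*c`, for `t` large. -/
lemma B_ge_of_A {c θ : ℝ} (hc : 0 < c) (hθ0 : 0 < θ) (hθ1 : θ < 1) :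
    ∀ᶠ t in atTop,
      (c ≤ Real.log (meanK a (t ^ θ)) / Real.log (t ^ θ)) →
      θ * c ≤ Real.log (Real.log (psum a t)) / Real.log t := by
  have hloginf : Tendsto Real.log atTop atTop := Real.tendsto_log_atTop
  filter_upwards [eventually_ge_atTop (2:ℝ),
    hloginf.eventually_ge_atTop ((1 + max 0 (-Real.log (P a 0 1))) / (1 - θ))] with t h2 h3 hA
  have ht1 : (1:ℝ) < t := by linarith
  have ht0 : (0:ℝ) < t := by linarith
  have hlogt : 0 < Real.log t := Real.log_pos ht1
  have htθ0 : 0 < t ^ θ := Real.rpow_pos_of_pos ht0 θ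
  have hlogtθ : Real.log (t ^ θ) = θ * Real.log t := Real.log_rpow ht0 θ
  have hlogtθpos : 0 < θ * Real.log t := mul_pos hθ0 hlogt
  have htθ1 : 1 ≤ t ^ θ := Real.one_le_rpow ht1.le hθ0.le
  have htθt : t ^ θ ≤ t := by
    calc t ^ θ ≤ t ^ (1:ℝ) := Real.rpow_le_rpow_of_exponent_le ht1.le hθ1.le
      _ = t := Real.rpow_one t
  -- from hA : c ≤ log m(t^θ) / (θ log t)
  rw [hlogtθ] at hA
  have hlm : c * (θ * Real.log t) ≤ Real.log (meanK a (t ^ θ)) := (le_div_iff₀ hlogtθpos).1 hA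
  have hmpos := meanK_pos hpos ha0 ha1 hconv htθ0
  have hm : Real.exp (c * (θ * Real.log t)) ≤ meanK a (t ^ θ) := by
    calc Real.exp (c * (θ * Real.log t)) ≤ Real.exp (Real.log (meanK a (t ^ θ))) :=
          Real.exp_le_exp.2 hlm
      _ = meanK a (t ^ θ) := Real.exp_log hmpos
  set E := Real.exp (c * (θ * Real.log t)) with hE
  have hE1 : 1 ≤ E := Real.one_le_exp (by positivity)
  -- FTC bounds
  have hftc1 := FTC_logF hpos ha0 ha1 hconv one_pos htθ1
  have hftc2 := FTC_logF hpos ha0 ha1 hconv htθ0 htθt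
  have hint1 : (0:ℝ) * (Real.log (t^θ) - Real.log 1) ≤ ∫ s in (1:ℝ)..(t^θ), meanK a s / s :=
    integral_div_ge one_pos htθ1 (contOn_meanK_div hpos ha0 ha1 hconv one_pos)
      (fun s hs => (meanK_pos hpos ha0 ha1 hconv (lt_of_lt_of_le one_pos hs.1)).le)
  have hint2 : meanK a (t^θ) * (Real.log t - Real.log (t^θ))
      ≤ ∫ s in (t^θ)..t, meanK a s / s :=
    integral_div_ge htθ0 htθt (contOn_meanK_div hpos ha0 ha1 hconv htθ0)
      (fun s hs => meanK_mono hpos ha0 ha1 hconv (Set.mem_Ioi.2 htθ0)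
        (Set.mem_Ioi.2 (lt_of_lt_of_le htθ0 hs.1)) hs.1)
  have hlF : Real.log (P a 0 1) + meanK a (t^θ) * ((1 - θ) * Real.log t)
      ≤ Real.log (P a 0 t) := by
    have e1 : Real.log t - Real.log (t^θ) = (1 - θ) * Real.log t := by
      rw [hlogtθ]; ring
    rw [e1] at hint2
    nlinarith [hint1, hint2, hftc1, hftc2]
  -- now show log F t ≥ E
  have h1θ : 0 < 1 - θ := by linarith
  have hgrow : 1 + max 0 (-Real.log (P a 0 1)) ≤ (1 - θ) * Real.log t := by
    have := (div_le_iff₀ h1θ).1 h3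
    linarith
  have hMge : E * ((1 - θ) * Real.log t) ≤ meanK a (t^θ) * ((1 - θ) * Real.log t) :=
    mul_le_mul_of_nonneg_right hm (by positivity)
  have hEgrow : E ≤ E * ((1 - θ) * Real.log t) := by
    nlinarith [hE1, hgrow, le_max_left (0:ℝ) (-Real.log (P a 0 1))]
  have hlFE : E ≤ Real.log (P a 0 t) := by
    have hmax : -Real.log (P a 0 1) ≤ max 0 (-Real.log (P a 0 1)) := le_max_right _ _
    nlinarith [hlF, hMge, hEgrow, hE1, hgrow]
  have hlFpos : 0 < Real.log (P a 0 t) := lt_of_lt_of_le (by positivity) hlFE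
  have hfinal : c * (θ * Real.log t) ≤ Real.log (Real.log (P a 0 t)) := by
    calc c * (θ * Real.log t) = Real.log E := by rw [hE, Real.log_exp]
      _ ≤ Real.log (Real.log (P a 0 t)) := Real.log_le_log (Real.exp_pos _) hlFE
  rw [psum_eq hpos ha0 ha1 hconv, le_div_iff₀ hlogt]
  linarith [hfinal]


lemma conj2 :
    Filter.liminf (fun t : ℝ => ((Real.log (meanK a t) / Real.log t : ℝ) : EReal)) atTop ≤
      Filter.liminf
        (fun t : ℝ => ((Real.log (Real.log (psum a t)) / Real.log t : ℝ) : EReal)) atTop := by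
  refine theta_le _ _ (liminfB_nonneg hpos ha0 ha1 hconv) (fun c hc0 hcx θ hθ0 hθ1 => ?_)
  have hev : ∀ᶠ s in atTop, c ≤ Real.log (meanK a s) / Real.log s :=
    (eventually_lt_of_lt_liminf hcx).mono (fun s hs => (EReal.coe_lt_coe_iff.1 hs).le)
  obtain ⟨s₀, hs₀⟩ := eventually_atTop.1 hev
  have htθ : Tendsto (fun t : ℝ => t ^ θ) atTop atTop := tendsto_rpow_atTop hθ0
  refine le_liminf_of_le (by isBoundedDefault) ?_
  filter_upwards [B_ge_of_A hpos ha0 ha1 hconv hc0 hθ0 hθ1, htθ.eventually_ge_atTop s₀]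
    with t h1 h2
  exact EReal.coe_le_coe_iff.2 (h1 (hs₀ _ h2))

lemma conj4a :
    Filter.limsup (fun t : ℝ => ((Real.log (meanK a t) / Real.log t : ℝ) : EReal)) atTop ≤
      Filter.limsup
        (fun t : ℝ => ((Real.log (Real.log (psum a t)) / Real.log t : ℝ) : EReal)) atTop := by
  have h0 : (0:EReal) ≤ Filter.limsup
      (fun t : ℝ => ((Real.log (Real.log (psum a t)) / Real.log t : ℝ) : EReal)) atTop :=
    (liminfB_nonneg hpos ha0 ha1 hconv).trans
      (liminf_le_limsup (by isBoundedDefault) (by isBoundedDefault))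
  refine theta_le _ _ h0 (fun c hc0 hcx θ hθ0 hθ1 => ?_)
  have hfreq : ∃ᶠ s in atTop, c ≤ Real.log (meanK a s) / Real.log s :=
    (frequently_lt_of_lt_limsup (by isBoundedDefault) hcx).mono
      (fun s hs => (EReal.coe_lt_coe_iff.1 hs).le)
  have hmap : Tendsto (fun s : ℝ => s ^ (1/θ)) atTop atTop :=
    tendsto_rpow_atTop (by positivity)
  have hfreq2 : ∃ᶠ s in atTop,
      c ≤ Real.log (meanK a ((s ^ (1/θ)) ^ θ)) / Real.log ((s ^ (1/θ)) ^ θ) := by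
    refine (hfreq.and_eventually (eventually_gt_atTop (0:ℝ))).mono (fun s hs => ?_)
    obtain ⟨h1, h2⟩ := hs
    have heq : (s ^ (1/θ)) ^ θ = s := by
      rw [← Real.rpow_mul h2.le, one_div_mul_cancel hθ0.ne', Real.rpow_one]
    rw [heq]
    exact h1
  have hfreq3 : ∃ᶠ t in atTop, c ≤ Real.log (meanK a (t ^ θ)) / Real.log (t ^ θ) :=
    hmap.frequently hfreq2
  refine le_limsup_of_frequently_le ?_ (by isBoundedDefault)
  exact ((hfreq3.and_eventually (B_ge_of_A hpos ha0 ha1 hconv hc0 hθ0 hθ1)).mono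
    (fun t ht => EReal.coe_le_coe_iff.2 (ht.2 ht.1)))

lemma conj4b :
    Filter.limsup
        (fun t : ℝ => ((Real.log (Real.log (psum a t)) / Real.log t : ℝ) : EReal)) atTop ≤
      Filter.limsup (fun t : ℝ => ((Real.log (meanK a t) / Real.log t : ℝ) : EReal)) atTop := by
  have hA0 : (0:EReal) ≤ Filter.limsup
      (fun t : ℝ => ((Real.log (meanK a t) / Real.log t : ℝ) : EReal)) atTop :=
    (liminfA_nonneg hpos ha0 ha1 hconv).trans
      (liminf_le_limsup (by isBoundedDefault) (by isBoundedDefault))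
  refine ereal_le_of_forall_gt _ _ (fun c hcx => ?_)
  obtain ⟨d, hd1, hd2⟩ := EReal.exists_between_coe_real hcx
  have hd0 : (0:ℝ) < d := by
    have h := lt_of_le_of_lt hA0 hd1
    exact_mod_cast h
  have hdc : d < c := EReal.coe_lt_coe_iff.1 hd2
  have hev : ∀ᶠ s in atTop, Real.log (meanK a s) / Real.log s ≤ d :=
    (eventually_lt_of_limsup_lt hd1).mono (fun s hs => (EReal.coe_lt_coe_iff.1 hs).le)
  obtain ⟨s₀, hs₀⟩ := eventually_atTop.1 hev
  set u := max s₀ 2 with hu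
  have hu2 : (2:ℝ) ≤ u := le_max_right _ _
  have hu0 : (0:ℝ) < u := by linarith
  set ε := (c - d)/2 with hε
  have hε0 : 0 < ε := by simp only [hε]; linarith
  set e := (c + d)/2 with he
  have he0 : 0 < e := by simp only [he]; linarith
  refine limsup_le_of_le (by isBoundedDefault) ?_
  have hlittle : ∀ᶠ x in atTop, ‖Real.log x‖ ≤ 1 * ‖x ^ ε‖ :=
    (isLittleO_log_rpow_atTop hε0).def one_pos
  filter_upwards [eventually_ge_atTop u, eventually_ge_atTop (2:ℝ), hlittle,
    (tendsto_rpow_atTop hε0).eventually_ge_atTop (2:ℝ),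
    (tendsto_rpow_atTop he0).eventually_ge_atTop (Real.log (P a 0 u)),
    ev_logF_ge hpos ha0 ha1 hconv 1] with x hxu hx2 hlog hxε hxe hlF1
  have hx0 : (0:ℝ) < x := by linarith
  have hlogx : 0 < Real.log x := Real.log_pos (by linarith)
  have hAx : Real.log (meanK a x) ≤ d * Real.log x := by
    have := hs₀ x ((le_max_left _ _).trans hxu)
    calc Real.log (meanK a x) = Real.log (meanK a x) / Real.log x * Real.log x := by
          field_simp
      _ ≤ d * Real.log x := mul_le_mul_of_nonneg_right this hlogx.le
  have hmpos := meanK_pos hpos ha0 ha1 hconv hx0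
  have hmx : meanK a x ≤ x ^ d := by
    rw [Real.rpow_def_of_pos hx0]
    calc meanK a x = Real.exp (Real.log (meanK a x)) := (Real.exp_log hmpos).symm
      _ ≤ Real.exp (Real.log x * d) := Real.exp_le_exp.2 (by rw [mul_comm]; exact hAx)
  have hint : (∫ s in u..x, meanK a s / s) ≤ meanK a x * (Real.log x - Real.log u) :=
    integral_div_le hu0 hxu (contOn_meanK_div hpos ha0 ha1 hconv hu0)
      (fun s hs => meanK_mono hpos ha0 ha1 hconv
        (Set.mem_Ioi.2 (lt_of_lt_of_le hu0 hs.1)) (Set.mem_Ioi.2 hx0) hs.2)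
  have hftc := FTC_logF hpos ha0 ha1 hconv hu0 hxu
  have hlogu : 0 ≤ Real.log u := Real.log_nonneg (by linarith)
  have hlFbound : Real.log (P a 0 x) ≤ Real.log (P a 0 u) + x ^ d * Real.log x := by
    have h1 : meanK a x * (Real.log x - Real.log u) ≤ meanK a x * Real.log x :=
      by nlinarith [hmpos.le, hlogu]
    have h2 : meanK a x * Real.log x ≤ x ^ d * Real.log x :=
      mul_le_mul_of_nonneg_right hmx hlogx.le
    linarith
  have hlogxε : Real.log x ≤ x ^ ε := by
    have h1 : Real.log x ≤ ‖Real.log x‖ := le_abs_self _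
    have h2 : ‖x ^ ε‖ = x ^ ε := abs_of_pos (Real.rpow_pos_of_pos hx0 ε)
    rw [h2, one_mul] at hlog
    linarith [hlog, h1]
  have hde : x ^ d * Real.log x ≤ x ^ e := by
    have h1 : x ^ d * Real.log x ≤ x ^ d * x ^ ε :=
      mul_le_mul_of_nonneg_left hlogxε (Real.rpow_pos_of_pos hx0 d).le
    have hexp : d + ε = e := by rw [hε, he]; ring
    have h2 : x ^ d * x ^ ε = x ^ e := by
      rw [← Real.rpow_add hx0, hexp]
    linarith
  have hec : x ^ e * x ^ ε = x ^ c := by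
    have hexp : e + ε = c := by rw [hε, he]; ring
    rw [← Real.rpow_add hx0, hexp]
  have hxepos : (0:ℝ) < x ^ e := Real.rpow_pos_of_pos hx0 e
  have hlFc : Real.log (P a 0 x) ≤ x ^ c := by
    nlinarith [hlFbound, hde, hxe, hxε, hec, hxepos]
  have hfin : Real.log (Real.log (P a 0 x)) ≤ c * Real.log x := by
    calc Real.log (Real.log (P a 0 x)) ≤ Real.log (x ^ c) :=
          Real.log_le_log (by linarith) hlFc
      _ = c * Real.log x := Real.log_rpow hx0 c
  rw [psum_eq hpos ha0 ha1 hconv]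
  refine EReal.coe_le_coe_iff.2 ?_
  rw [div_le_iff₀ hlogx]
  linarith

end main2
end St10

/-- Proposition 2.5.3. For `f ∈ K` entire, with all limits as `t → ∞`
taken in `EReal`:
`liminf σ_f²/m_f ≤ liminf (log m_f)/(log t) ≤ liminf (log log f)/(log t)
 ≤ limsup (log log f)/(log t) = limsup (log m_f)/(log t) = ρ(f) ≤ limsup σ_f²/m_f`. -/
theorem statement10 (a : ℕ → ℝ)
    (hpos : ∀ n, 0 ≤ a n) (ha0 : 0 < a 0) (ha1 : ∃ n, 1 ≤ n ∧ 0 < a n)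
    (hconv : ∀ t : ℝ, Summable fun n : ℕ => a n * t ^ n) :
    Filter.liminf (fun t : ℝ => ((varK a t / meanK a t : ℝ) : EReal)) atTop ≤
        Filter.liminf (fun t : ℝ => ((Real.log (meanK a t) / Real.log t : ℝ) : EReal)) atTop ∧
    Filter.liminf (fun t : ℝ => ((Real.log (meanK a t) / Real.log t : ℝ) : EReal)) atTop ≤
        Filter.liminf
          (fun t : ℝ => ((Real.log (Real.log (psum a t)) / Real.log t : ℝ) : EReal)) atTop ∧
    Filter.liminf
        (fun t : ℝ => ((Real.log (Real.log (psum a t)) / Real.log t : ℝ) : EReal)) atTop ≤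
      Filter.limsup
        (fun t : ℝ => ((Real.log (Real.log (psum a t)) / Real.log t : ℝ) : EReal)) atTop ∧
    Filter.limsup
        (fun t : ℝ => ((Real.log (Real.log (psum a t)) / Real.log t : ℝ) : EReal)) atTop =
      Filter.limsup (fun t : ℝ => ((Real.log (meanK a t) / Real.log t : ℝ) : EReal)) atTop ∧
    Filter.limsup (fun t : ℝ => ((Real.log (meanK a t) / Real.log t : ℝ) : EReal)) atTop ≤
      Filter.limsup (fun t : ℝ => ((varK a t / meanK a t : ℝ) : EReal)) atTop := by
  exact ⟨St10.conj1 hpos ha0 ha1 hconv, St10.conj2 hpos ha0 ha1 hconv,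
    Filter.liminf_le_limsup (by isBoundedDefault) (by isBoundedDefault),
    le_antisymm (St10.conj4b hpos ha0 ha1 hconv) (St10.conj4a hpos ha0 ha1 hconv),
    St10.conj5 hpos ha0 ha1 hconv⟩
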